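/- arXiv:1410.2520 — 2 statements merged into one kernel-verified Lean document; each statement's English description precedes it below -/
import Mathlib

section
/- For ordinals γ, m, δ with γ, m, δ nonzero, m finite, and δ < ω^γ, the ordinal ω^γ·m + 1 + δ + 1 with its order topology is homeomorphic to ω^γ·m + 1 with its order topology. -/
open Set Ordinal
open scoped Cardinal

noncomputable section

universe u

/-- Natural (Hessenberg) addition of ordinals, as `Ordinal.nadd` in the older Mathlib
(removed from Mathlib since). -/
def Ordinal.nadd (a b : Ordinal.{u}) : Ordinal.{u} :=
  max (blsub.{u, u} a fun a' _ => nadd a' b) (blsub.{u, u} b fun b' _ => nadd a b')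
termination_by (a, b)
decreasing_by
  · exact Prod.Lex.left _ _ ‹_›
  · exact Prod.Lex.right _ ‹_›

infixl:65 " ♯ " => Ordinal.nadd

/-- Derived set (non-isolated points) of a set of ordinals, as a subspace. -/
def deriv' (s : Set Ordinal.{0}) : Set Ordinal.{0} := {x ∈ s | x ∈ closure (s \ {x})}

/-- Iterated Cantor–Bendixson derivative. -/
def iterDeriv (s : Set Ordinal.{0}) (o : Ordinal.{0}) : Set Ordinal.{0} :=
  Ordinal.limitRecOn o s (fun _ ih => deriv' ih) (fun o _ ih => ⋂ (p : Ordinal.{0}) (h : p < o), ih p h)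

/-- `s` contains a homeomorphic copy of the ordinal `α` (with its order topology). -/
def HomeoCopy (α : Ordinal.{0}) (s : Set Ordinal.{0}) : Prop :=
  ∃ t : Set Ordinal, t ⊆ s ∧ Nonempty ((Iio α : Set Ordinal.{0}) ≃ₜ t)

/-- Two ordinals are biembeddable: each is homeomorphic to a subspace of the other. -/
def Biembed (α β : Ordinal.{0}) : Prop := HomeoCopy α (Iio β) ∧ HomeoCopy β (Iio α)

/-- Two sets of ordinals are order-homeomorphic: there is an order-preserving homeomorphism. -/
def OrderHomeo (X Y : Set Ordinal.{0}) : Prop :=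
  ∃ e : X ≃ₜ Y, ∀ a b : X, a ≤ b ↔ e a ≤ e b

/-- An ordinal is order-reinforcing. -/
def OrderReinforcing (α : Ordinal.{0}) : Prop :=
  ∀ X : Set Ordinal, Nonempty ((Iio α : Set Ordinal.{0}) ≃ₜ X) → ∃ Y ⊆ X, OrderHomeo (Iio α) Y

/-- The Cantor–Bendixson rank of an ordinal: the least exponent in its Cantor normal form. -/
def CB (x : Ordinal.{0}) : Ordinal := if x = 0 then 0 else sSup {γ | (ω : Ordinal.{0}) ^ γ ∣ x}

/-- The natural (Hessenberg) sum of a finite family of ordinals. -/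
def natSumFam {k : ℕ} (α : Fin k → Ordinal.{0}) : Ordinal := (List.ofFn α).foldr (· ♯ ·) 0

/-- The Milner–Rado sum of a finite family of ordinals. -/
def mrSumFam {k : ℕ} (α : Fin k → Ordinal.{0}) : Ordinal :=
  sInf {δ | ∀ β : Fin k → Ordinal, (∀ i, β i < α i) → δ ≠ natSumFam β}

/-- The topological pigeonhole relation `β → (top α i)¹` for finitely many colours. -/
def TopPH {k : ℕ} (β : Ordinal.{0}) (α : Fin k → Ordinal.{0}) : Prop :=
  ∀ c : Ordinal → Fin k, ∃ i, HomeoCopy (α i) (Iio β ∩ c ⁻¹' {i})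

/-- The topological pigeonhole relation with an arbitrary index type of colours. -/
def TopPHFam {ι : Type*} (β : Ordinal.{0}) (α : ι → Ordinal.{0}) : Prop :=
  ∀ c : Ordinal → ι, ∃ i, HomeoCopy (α i) (Iio β ∩ c ⁻¹' {i})

/-- `ω̄[γ, m]`: `ω ^ γ * m + 1` if `γ > 0`, and `m` if `γ = 0`. -/
def obar (γ : Ordinal.{0}) (m : ℕ) : Ordinal := if γ = 0 then (m : Ordinal.{0}) else ω ^ γ * m + 1

/-- `C` is closed and unbounded in `o`. -/
def IsClubIn (C : Set Ordinal.{0}) (o : Ordinal.{0}) : Prop :=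
  C ⊆ Iio o ∧ (∀ x < o, ∃ y ∈ C, x ≤ y) ∧
    ∀ x < o, x ≠ 0 → (∀ y < x, ∃ z ∈ C, y < z ∧ z < x) → x ∈ C

/-- `S` is stationary in `o`: it meets every club subset of `o`. -/
def StationaryIn (S : Set Ordinal.{0}) (o : Ordinal.{0}) : Prop :=
  ∀ C, IsClubIn C o → (S ∩ C).Nonempty


/-- clopen split -/
def clopenSumHomeo {X : Type*} [TopologicalSpace X] {s : Set X} (hs : IsClopen s) :
    (↥s ⊕ ↥sᶜ) ≃ₜ X := by
  classical
  have hf : ⇑(Equiv.Set.sumCompl s) = Sum.elim (Subtype.val) (Subtype.val) := by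
    funext x; cases x with
    | inl x => exact Equiv.Set.sumCompl_apply_inl s x
    | inr x => exact Equiv.Set.sumCompl_apply_inr s x
  exact Equiv.toHomeomorphOfContinuousOpen (Equiv.Set.sumCompl s)
    (by rw [hf]; exact continuous_subtype_val.sumElim continuous_subtype_val)
    (by rw [hf]
        exact IsOpenMap.sumElim (hs.2.isOpenMap_subtype_val) (hs.1.isOpen_compl.isOpenMap_subtype_val))

def valImageHomeo {X : Type*} [TopologicalSpace X] {u : Set X} (t : Set ↥u) :
    ↥t ≃ₜ ↥(Subtype.val '' t) :=
  (Topology.IsEmbedding.toHomeomorph (f := fun x : ↥t => ((x : ↥u) : X))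
    (Topology.IsEmbedding.subtypeVal.comp Topology.IsEmbedding.subtypeVal)).trans
    (Homeomorph.setCongr (by
      have : (fun x : ↥t => ((x : ↥u) : X)) = Subtype.val ∘ (Subtype.val : ↥t → ↥u) := rfl
      rw [this, Set.range_comp, Subtype.range_coe]))

def addOrderIso (a b : Ordinal.{0}) (hb : 0 < b) :
    (Iio b : Set Ordinal.{0}) ≃o (Ico a (a + b) : Set Ordinal.{0}) where
  toFun x := ⟨a + x, le_self_add, (add_lt_add_iff_left a).2 x.2⟩
  invFun y := ⟨y.1 - a, sub_lt_of_lt_add y.2.2 hb⟩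
  left_inv x := by ext; exact add_sub_cancel a x
  right_inv y := by ext; exact Ordinal.add_sub_cancel_of_le y.2.1
  map_rel_iff' := by intro x y; exact add_le_add_iff_left a

lemma split_succ (a b s0 : Ordinal.{0}) (ha : a = s0 + 1) (hb : 0 < b) :
    Nonempty ((Iio (a + b) : Set Ordinal.{0}) ≃ₜ
      ((Iio a : Set Ordinal.{0}) ⊕ (Iio b : Set Ordinal.{0}))) := by
  set X := (Iio (a + b) : Set Ordinal.{0})
  set A : Set X := Subtype.val ⁻¹' (Iio a) with hA
  have hclopen : IsClopen A := by
    constructor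
    · have : A = Subtype.val ⁻¹' (Iic s0) := by
        ext x
        simp only [hA, mem_preimage, mem_Iio, mem_Iic, ha]
        exact Order.lt_add_one_iff
      rw [this]
      exact isClosed_Iic.preimage continuous_subtype_val
    · exact isOpen_Iio.preimage continuous_subtype_val
  have h1 : Subtype.val '' A = Iio a := by
    ext x
    simp only [hA, Subtype.image_preimage_coe, mem_inter_iff, mem_Iio, X]
    exact ⟨fun h => h.2, fun h => ⟨lt_of_lt_of_le h (le_self_add), h⟩⟩
  have h2 : Subtype.val '' Aᶜ = Ico a (a + b) := by
    ext x
    simp only [hA, compl_def, mem_image, mem_setOf_eq, mem_preimage, mem_Iio, mem_Ico]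
    constructor
    · rintro ⟨⟨y, hy⟩, hxy, rfl⟩; exact ⟨not_lt.1 hxy, hy⟩
    · rintro ⟨h1', h2'⟩; exact ⟨⟨x, h2'⟩, not_lt.2 h1', rfl⟩
  refine ⟨(clopenSumHomeo hclopen).symm.trans (Homeomorph.sumCongr
    ((valImageHomeo A).trans (Homeomorph.setCongr h1))
    (((valImageHomeo Aᶜ).trans (Homeomorph.setCongr h2)).trans
      (addOrderIso a b hb).toHomeomorph.symm))⟩


/-- `ω^γ·m + 1 + δ + 1` is homeomorphic to `ω^γ·m + 1` (order topologies). -/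
theorem homeo_omega_pow_mul_succ_add (γ m δ : Ordinal.{0}) (hγ : γ ≠ 0) (hm : m ≠ 0)
    (hmfin : m < ω) (hδ : δ ≠ 0) (hδlt : δ < ω ^ γ) :
    Nonempty ((Iio (ω ^ γ * m + 1 + δ + 1) : Set Ordinal.{0}) ≃ₜ
      (Iio (ω ^ γ * m + 1) : Set Ordinal.{0})) := by
  have hlim : Order.IsSuccLimit (ω ^ γ : Ordinal) := isSuccLimit_opow_left isSuccLimit_omega0 hγ
  have h1 : δ + 1 < ω ^ γ := by have := hlim.succ_lt hδlt; rwa [Order.succ_eq_add_one] at this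
  obtain ⟨n, rfl⟩ := lt_omega0.1 hmfin
  obtain ⟨k, rfl⟩ := Nat.exists_eq_succ_of_ne_zero (by simpa using hm)
  have hmk : ((k + 1 : ℕ) : Ordinal) = 1 + (k : Ordinal) := by
    rw [one_add_natCast]; rfl
  have key : (δ + 1) + (ω ^ γ * ((k + 1 : ℕ) : Ordinal) + 1)
      = ω ^ γ * ((k + 1 : ℕ) : Ordinal) + 1 := by
    rw [hmk, mul_add, mul_one, ← add_assoc, ← add_assoc, add_omega0_opow h1]
  obtain ⟨e1⟩ := split_succ (ω ^ γ * ((k + 1 : ℕ) : Ordinal) + 1) (δ + 1)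
    (ω ^ γ * ((k + 1 : ℕ) : Ordinal)) rfl ((zero_le (a := δ)).trans_lt (lt_add_one δ))
  obtain ⟨e2⟩ := split_succ (δ + 1) (ω ^ γ * ((k + 1 : ℕ) : Ordinal) + 1) δ rfl
    (zero_le.trans_lt (lt_add_one _))
  rw [key] at e2
  have hgoal : ω ^ γ * ((k + 1 : ℕ) : Ordinal) + 1 + δ + 1
      = (ω ^ γ * ((k + 1 : ℕ) : Ordinal) + 1) + (δ + 1) := by rw [add_assoc]
  rw [hgoal, show ((k.succ : ℕ) : Ordinal) = ((k + 1 : ℕ) : Ordinal) from rfl]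
  exact ⟨e1.trans ((Homeomorph.sumComm _ _).trans e2.symm)⟩


end
end

section
/- Let α and η be ordinals, Y a set of ordinals of order type α, and X = { x < η : CB(x) ∈ Y }, where CB(x) is the Cantor–Bendixson rank of x. Then the α-th Cantor–Bendixson derivative of X (as a subspace of η) is empty. -/
open Set Ordinal
open scoped Cardinal

noncomputable section

/-- Natural (Hessenberg) addition of ordinals, as in the former Mathlib `Ordinal.nadd`
(`max (blsub a (· ♯ b)) (blsub b (a ♯ ·))`), which is no longer in Mathlib. -/
def nadd : Ordinal.{0} → Ordinal.{0} → Ordinal.{0}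
  | a, b => max (⨆ a' : Iio a, Order.succ (nadd a'.1 b)) (⨆ b' : Iio b, Order.succ (nadd a b'.1))
termination_by a b => (a, b)
decreasing_by
  · exact Prod.Lex.left _ _ a'.2
  · exact Prod.Lex.right _ b'.2

infixl:65 " ♯ " => nadd

lemma CB_bddAbove {x : Ordinal.{0}} (hx : x ≠ 0) : BddAbove {γ : Ordinal.{0} | (ω:Ordinal.{0}) ^ γ ∣ x} := by
  refine ⟨x, ?_⟩
  intro γ hγ
  exact (right_le_opow γ one_lt_omega0).trans (le_of_dvd hx hγ)

lemma opow_CB_dvd {x : Ordinal.{0}} (hx : x ≠ 0) : (ω:Ordinal.{0}) ^ CB x ∣ x := by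
  rw [CB, if_neg hx]
  have hne : Set.Nonempty {γ : Ordinal.{0} | (ω:Ordinal.{0}) ^ γ ∣ x} := ⟨0, by simp⟩
  have hbdd := CB_bddAbove hx
  set S : Set Ordinal := {γ : Ordinal.{0} | (ω:Ordinal.{0}) ^ γ ∣ x} with hS
  rcases zero_or_succ_or_isSuccLimit (sSup S) with h | ⟨k, h⟩ | h
  · rw [h]; simpa using one_dvd x
  · obtain ⟨γ, hγS, hkγ⟩ := exists_lt_of_lt_csSup hne (h ▸ Order.lt_succ k)
    have hγ : γ = sSup S :=
      le_antisymm (le_csSup hbdd hγS) (h ▸ (Order.succ_le_iff.2 hkγ))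
    exact hγ ▸ hγS
  · rw [dvd_iff_mod_eq_zero]
    by_contra hr
    have hlt : x % ω ^ sSup S < ω ^ sSup S := mod_lt x (opow_ne_zero _ omega0_ne_zero)
    obtain ⟨γ, hγ, hrγ⟩ := (lt_opow_of_isSuccLimit omega0_ne_zero h).1 hlt
    obtain ⟨δ, hδS, hγδ⟩ := exists_lt_of_lt_csSup hne hγ
    have hγS : (ω:Ordinal.{0}) ^ γ ∣ x := (opow_dvd_opow ω hγδ.le).trans hδS
    have e1 : (ω:Ordinal.{0}) ^ sSup S = ω ^ γ * ω ^ (sSup S - γ) := by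
      rw [← opow_add, Ordinal.add_sub_cancel_of_le hγ.le]
    have e2 := Ordinal.div_add_mod x ((ω:Ordinal.{0}) ^ sSup S)
    rw [e1, mul_assoc] at e2
    rw [e1] at hrγ hr
    have h0 : x % (ω:Ordinal.{0}) ^ γ = 0 := dvd_iff_mod_eq_zero.1 hγS
    rw [← e2, mul_add_mod_self, mod_eq_of_lt hrγ] at h0
    exact hr h0

lemma not_opow_succ_dvd {x : Ordinal.{0}} (hx : x ≠ 0) :
    ¬ (ω:Ordinal.{0}) ^ (CB x + 1) ∣ x := by
  intro h
  have h1 : CB x + 1 ≤ CB x := by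
    conv_rhs => rw [CB, if_neg hx]
    exact le_csSup (CB_bddAbove hx) h
  rw [add_one_eq_succ] at h1
  exact (Order.lt_succ (CB x)).not_ge h1

lemma cb_isolated {x : Ordinal.{0}} {s : Set Ordinal.{0}}
    (hs : ∀ y ∈ s, (ω:Ordinal.{0}) ^ CB x ∣ y) : x ∉ closure (s \ {x}) := by
  intro hcl
  rcases eq_or_ne x 0 with rfl | hx0
  · obtain ⟨y, hy1, -, hyx⟩ := mem_closure_iff.1 hcl (Iio 1) isOpen_Iio (by simp)
    exact hyx (lt_one_iff_zero.1 hy1)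
  · obtain ⟨b, hb⟩ := opow_CB_dvd hx0
    have hb0 : b ≠ 0 := by rintro rfl; rw [mul_zero] at hb; exact hx0 hb
    have hbs : ¬ (ω:Ordinal.{0}) ∣ b := by
      rintro ⟨c, hc⟩
      exact not_opow_succ_dvd hx0 ⟨c, by rw [opow_add, opow_one, mul_assoc, ← hc, ← hb]⟩
    obtain ⟨b', hb'⟩ : ∃ b', b = b' + 1 := by
      rcases zero_or_succ_or_isSuccLimit b with h | ⟨a, h⟩ | h
      · exact absurd h hb0
      · exact ⟨a, by rw [← h, add_one_eq_succ]⟩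
      · exact absurd (isSuccLimit_iff_omega0_dvd.1 h).2 hbs
    rw [hb'] at hb
    set m := CB x with hm
    have hU : IsOpen (Ioi ((ω:Ordinal.{0}) ^ m * b') ∩ Iio (x + 1)) :=
      isOpen_Ioi.inter isOpen_Iio
    have hxU : x ∈ Ioi ((ω:Ordinal.{0}) ^ m * b') ∩ Iio (x + 1) := by
      constructor
      · rw [hb, mul_add_one]
        exact lt_add_of_pos_right _ (opow_pos _ omega0_pos)
      · rw [mem_Iio, add_one_eq_succ]; exact Order.lt_succ x
    obtain ⟨y, hyU, hys, hyx⟩ := mem_closure_iff.1 hcl _ hU hxU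
    obtain ⟨q, rfl⟩ := hs y hys
    apply hyx
    have h1 : b' < q := (mul_lt_mul_iff_right₀ (opow_pos _ omega0_pos)).1 hyU.1
    have h2 : q ≤ b' + 1 := by
      have h3 : (ω:Ordinal.{0}) ^ m * q ≤ x := by
        have := hyU.2
        rw [mem_Iio, add_one_eq_succ, Order.lt_succ_iff] at this
        exact this
      rw [hb] at h3
      exact (mul_le_mul_iff_right₀ (opow_pos _ omega0_pos)).1 h3
    have hq : q = b' + 1 := le_antisymm h2 (by rwa [add_one_eq_succ, Order.succ_le_iff])
    exact mem_singleton_iff.2 (by rw [hq, ← hb])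

/-- If `Y` has order type `α` and `X = {x < η | CB x ∈ Y}`, then the `α`-th
Cantor–Bendixson derivative of `X` is empty. -/
theorem iterDeriv_rank_colouring (α η : Ordinal.{0}) (Y : Set Ordinal.{0})
    (hY : Nonempty ((Iio α : Set Ordinal.{0}) ≃o Y)) :
    iterDeriv {x : Ordinal.{0} | x < η ∧ CB x ∈ Y} α = ∅ := by
  obtain ⟨e⟩ := hY
  set X : Set Ordinal.{0} := {x : Ordinal.{0} | x < η ∧ CB x ∈ Y} with hX
  have key : ∀ ζ : Ordinal.{0}, ∀ x ∈ iterDeriv X ζ,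
      ∃ h : CB x ∈ Y, ζ ≤ (e.symm ⟨CB x, h⟩ : Iio α).1 := by
    intro ζ
    induction ζ using Ordinal.limitRecOn with
    | zero =>
      intro x hx
      rw [iterDeriv, Ordinal.limitRecOn_zero] at hx
      exact ⟨hx.2, zero_le⟩
    | add_one ζ ih =>
      intro x hx
      rw [iterDeriv, Ordinal.limitRecOn_add_one] at hx
      obtain ⟨hxs, hxcl⟩ := hx
      have hxs' : x ∈ iterDeriv X ζ := hxs
      obtain ⟨h, hζ⟩ := ih x hxs'
      refine ⟨h, ?_⟩
      rw [add_one_eq_succ, Order.succ_le_iff]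
      rcases lt_or_eq_of_le hζ with h' | h'
      · exact h'
      exfalso
      refine cb_isolated (s := iterDeriv X ζ) ?_ hxcl
      intro y hy
      obtain ⟨hy', hζy⟩ := ih y hy
      rcases eq_or_ne y 0 with rfl | hy0
      · exact dvd_zero _
      · have hle : CB x ≤ CB y := by
          have h1 : e.symm ⟨CB x, h⟩ ≤ e.symm ⟨CB y, hy'⟩ :=
            Subtype.coe_le_coe.1 (h'.symm.le.trans hζy)
          have h2 : (⟨CB x, h⟩ : Y) ≤ ⟨CB y, hy'⟩ := e.symm.le_iff_le.1 h1
          exact_mod_cast h2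
        exact (opow_dvd_opow ω hle).trans (opow_CB_dvd hy0)
    | limit ζ hζ ih =>
      intro x hx
      rw [iterDeriv, Ordinal.limitRecOn_limit _ _ _ _ hζ] at hx
      simp only [Set.mem_iInter] at hx
      have hx' : ∀ p, p < ζ → x ∈ iterDeriv X p := fun p hp => hx p hp
      obtain ⟨h, -⟩ := ih 0 hζ.pos x (hx' 0 hζ.pos)
      refine ⟨h, le_of_forall_lt fun p hp => ?_⟩
      obtain ⟨h2, hle⟩ := ih (Order.succ p) (hζ.succ_lt hp) x (hx' _ (hζ.succ_lt hp))
      exact (Order.lt_succ p).trans_le hle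
  ext x
  simp only [mem_empty_iff_false, iff_false]
  intro hx
  obtain ⟨h, hle⟩ := key α x hx
  exact absurd hle (not_le.2 (e.symm ⟨CB x, h⟩).2)

end
end
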